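/- Let S be a semigroup, z₀ ∈ S, q, γ ∈ ℂ with q ≠ 0 and γ ≠ 0, ξ ∈ ℂ with ξ² = 1+q², and χ₁, χ₂ : S → ℂ multiplicative functions satisfying χ₁(z₀) = (q² − (1+ξ)²)/(2γq) and χ₂(z₀) = −(q² − (1−ξ)²)/(2γq). Define f = (χ₁+χ₂)/(2γ) + ξ(χ₁−χ₂)/(2γ) and g = q(χ₁−χ₂)/(2γ). Then g(xyz₀) = g(x)g(y) − f(x)f(y) for all x,y ∈ S. -/

import Mathlib

theorem stmt_10 {S : Type*} [Semigroup S] (z₀ : S) (q γ ξ : ℂ)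
    (hq : q ≠ 0) (hγ : γ ≠ 0) (hξ : ξ ^ 2 = 1 + q ^ 2)
    (χ₁ χ₂ : S → ℂ)
    (h₁ : ∀ x y : S, χ₁ (x * y) = χ₁ x * χ₁ y)
    (h₂ : ∀ x y : S, χ₂ (x * y) = χ₂ x * χ₂ y)
    (hz₁ : χ₁ z₀ = (q ^ 2 - (1 + ξ) ^ 2) / (2 * γ * q))
    (hz₂ : χ₂ z₀ = -((q ^ 2 - (1 - ξ) ^ 2) / (2 * γ * q)))
    (f g : S → ℂ)
    (hf : f = fun x => (χ₁ x + χ₂ x) / (2 * γ) + ξ * ((χ₁ x - χ₂ x) / (2 * γ)))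
    (hg : g = fun x => q * ((χ₁ x - χ₂ x) / (2 * γ))) :
    ∀ x y : S, g (x * y * z₀) = g x * g y - f x * f y := by
  intro x y
  subst hf hg
  simp only [h₁, h₂, hz₁, hz₂]
  field_simp
  linear_combination (4*γ^2*(χ₁ x * χ₁ y + χ₂ x * χ₂ y) - (χ₁ x - χ₂ x)*(χ₁ y - χ₂ y)*4*γ^2 - (1+q)*(χ₁ x * χ₂ y + χ₁ y * χ₂ x)*4*γ^2 + (χ₁ x * χ₂ y + χ₁ y * χ₂ x)*(4*q*γ^2 - 1)) * hξ
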